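/- Let L be a frame and a ∈ L. Let ↑a = {x ∈ L | a ≤ x} and ↓a = {x ∈ L | x ≤ a}, each a frame with the inherited order, and let x_a : L → ↑a × ↓a be the frame homomorphism b ↦ (a ⊔ b, a ⊓ b). Then for every frame K and every frame homomorphism k : L → K such that k(a) is complemented in K (i.e., there is b ∈ K with k(a) ⊓ b = ⊥ and k(a) ⊔ b = ⊤), there exists a unique frame homomorphism n : ↑a × ↓a → K with n ∘ x_a = k; moreover n is given by n(u, v) = (k(u) ⊓ b) ⊔ k(v), where b is the complement of k(a). -/

import Mathlib

open Set

variable {L : Type*} [Order.Frame L]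

/-- The downset `↓a = {x | x ≤ a}` of a frame is a frame under the inherited order. -/
noncomputable instance Set.Iic.instFrameOfFrame (a : L) : Order.Frame (Set.Iic a) :=
  @Order.Frame.ofMinimalAxioms _ (Set.Iic.instCompleteLattice (a := a))
    {
      inf_sSup_le_iSup_inf := by
        intro x S
        rw [← Subtype.coe_le_coe]
        calc (↑(x ⊓ sSup S) : L) = ↑x ⊓ sSup ((↑) '' S) := rfl
          _ = ⨆ b ∈ ((↑) '' S : Set L), ↑x ⊓ b := inf_sSup_eq
          _ ≤ ↑(⨆ b ∈ S, x ⊓ b) := by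
              rw [iSup_image]
              rw [Set.Iic.coe_biSup]
              exact le_of_eq rfl }

/-- The upset `↑a = {x | a ≤ x}` of a frame is a complete lattice under the inherited
order, with bottom `a`. -/
noncomputable instance Set.Ici.instCompleteLatticeOfFrame (a : L) :
    CompleteLattice (Set.Ici a) :=
  { Set.Ici.lattice, Set.Ici.boundedOrder with
    sSup := fun S => ⟨a ⊔ sSup ((↑) '' S), le_sup_left⟩
    isLUB_sSup := fun S => ⟨fun ⦃b⦄ hb =>
      le_sup_of_le_right (le_sSup (mem_image_of_mem Subtype.val hb)),
      fun b hb => sup_le b.2 (sSup_le (by rintro c ⟨d, hd, rfl⟩; exact hb hd))⟩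
    sInf := fun S => ⟨sInf ((↑) '' S), le_sInf (by rintro c ⟨d, _, rfl⟩; exact d.2)⟩
    isGLB_sInf := fun S => ⟨fun ⦃b⦄ hb => sInf_le (mem_image_of_mem Subtype.val hb),
      fun b hb => le_sInf (by rintro c ⟨d, hd, rfl⟩; exact hb hd)⟩ }

/-- The upset `↑a = {x | a ≤ x}` of a frame is a frame under the inherited order. -/
noncomputable instance Set.Ici.instFrameOfFrame (a : L) : Order.Frame (Set.Ici a) :=
  @Order.Frame.ofMinimalAxioms _ (Set.Ici.instCompleteLatticeOfFrame a)
    {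
      inf_sSup_le_iSup_inf := by
        intro x S
        rw [← Subtype.coe_le_coe]
        calc (↑(x ⊓ sSup S) : L) = ↑x ⊓ (a ⊔ sSup ((↑) '' S)) := rfl
          _ = (↑x ⊓ a) ⊔ (↑x ⊓ sSup ((↑) '' S)) := inf_sup_left _ _ _
          _ = a ⊔ ⨆ b ∈ ((↑) '' S : Set L), ↑x ⊓ b := by
              rw [inf_eq_right.mpr x.2, inf_sSup_eq]
          _ ≤ ↑(⨆ b ∈ S, x ⊓ b) := by
              refine sup_le (⨆ b ∈ S, x ⊓ b).2 ?_
              refine iSup₂_le ?_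
              rintro b ⟨c, hc, rfl⟩
              exact Subtype.coe_le_coe.mpr (le_iSup₂ (f := fun b (_ : b ∈ S) => x ⊓ b) c hc) }

/-- The map `x_a : L → ↑a × ↓a`, `b ↦ (a ⊔ b, a ⊓ b)`, the product of the closed and open
quotient maps associated with `a`. -/
def xMap (a : L) : L → Set.Ici a × Set.Iic a :=
  fun b => (⟨a ⊔ b, le_sup_left⟩, ⟨a ⊓ b, inf_le_left⟩)

/-- Lemma 5: `a` is freely complemented in the extension `x_a : L → ↑a × ↓a`.  For every
frame `K` and every frame homomorphism `k : L → K` such that `k a` has a complement `b` in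
`K`, there is a unique frame homomorphism `n : ↑a × ↓a → K` with `n ∘ x_a = k`; moreover
`n` is given by `n (u, v) = (k u ⊓ b) ⊔ k v`. -/
theorem freely_complemented {K : Type*} [Order.Frame K] (a : L) (k : FrameHom L K)
    (b : K) (hb₁ : k a ⊓ b = ⊥) (hb₂ : k a ⊔ b = ⊤) :
    (∃! n : FrameHom (Set.Ici a × Set.Iic a) K, ∀ x : L, n (xMap a x) = k x) ∧
      ∀ n : FrameHom (Set.Ici a × Set.Iic a) K, (∀ x : L, n (xMap a x) = k x) →
        ∀ (u : Set.Ici a) (v : Set.Iic a), n (u, v) = (k ↑u ⊓ b) ⊔ k ↑v := by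
  classical
  have hvb : ∀ v : Set.Iic a, k ↑v ⊓ b = ⊥ := fun v =>
    le_bot_iff.mp (hb₁ ▸ inf_le_inf_right b (OrderHomClass.mono k v.2))
  set f : Set.Ici a × Set.Iic a → K := fun p => (k ↑p.1 ⊓ b) ⊔ k ↑p.2 with hf
  have htop : f ⊤ = ⊤ := by
    show (k (⊤ : L) ⊓ b) ⊔ k a = ⊤
    rw [map_top, top_inf_eq, sup_comm, hb₂]
  have hinf : ∀ p q, f (p ⊓ q) = f p ⊓ f q := by
    intro p q
    show (k (↑p.1 ⊓ ↑q.1) ⊓ b) ⊔ k (↑p.2 ⊓ ↑q.2) = _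
    rw [map_inf, map_inf]
    refine le_antisymm (sup_le (le_inf ?_ ?_) (le_inf ?_ ?_)) ?_
    · exact le_sup_of_le_left (inf_le_inf_right b inf_le_left)
    · exact le_sup_of_le_left (inf_le_inf_right b inf_le_right)
    · exact le_sup_of_le_right inf_le_left
    · exact le_sup_of_le_right inf_le_right
    · rw [inf_sup_right, inf_sup_left, inf_sup_left]
      refine sup_le (sup_le ?_ ?_) (sup_le ?_ ?_)
      · exact le_sup_of_le_left
          (le_inf (inf_le_inf inf_le_left inf_le_left) (inf_le_of_left_le inf_le_right))
      · refine le_trans ?_ (bot_le : (⊥ : K) ≤ _)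
        calc (k ↑p.1 ⊓ b) ⊓ k ↑q.2 ≤ b ⊓ k ↑q.2 := inf_le_inf_right _ inf_le_right
          _ = ⊥ := by rw [inf_comm]; exact hvb q.2
      · refine le_trans ?_ (bot_le : (⊥ : K) ≤ _)
        calc k ↑p.2 ⊓ (k ↑q.1 ⊓ b) ≤ k ↑p.2 ⊓ b := inf_le_inf_left _ inf_le_right
          _ = ⊥ := hvb p.2
      · exact le_sup_of_le_right (le_refl _)
  have hsSup : ∀ S : Set (Set.Ici a × Set.Iic a), f (sSup S) = sSup (f '' S) := by
    intro S
    have h1 : (↑(sSup S).1 : L) = a ⊔ ⨆ p : S, ((p : Set.Ici a × Set.Iic a).1 : L) := by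
      rw [Prod.fst_sSup]
      show a ⊔ sSup (Subtype.val '' (Prod.fst '' S)) = _
      rw [Set.image_image, sSup_image']
    have h2 : (↑(sSup S).2 : L) = ⨆ p : S, ((p : Set.Ici a × Set.Iic a).2 : L) := by
      rw [Prod.snd_sSup]
      show sSup (Subtype.val '' (Prod.snd '' S)) = _
      rw [Set.image_image, sSup_image']
    show (k ↑(sSup S).1 ⊓ b) ⊔ k ↑(sSup S).2 = _
    rw [h1, h2, sSup_image', map_sup, map_iSup, map_iSup, inf_sup_right, hb₁, bot_sup_eq,
      iSup_inf_eq, ← iSup_sup_eq]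
  let n : FrameHom (Set.Ici a × Set.Iic a) K :=
    { toFun := f, map_inf' := hinf, map_top' := htop, map_sSup' := hsSup }
  have hn : ∀ x : L, n (xMap a x) = k x := by
    intro x
    show (k (a ⊔ x) ⊓ b) ⊔ k (a ⊓ x) = k x
    rw [map_sup, map_inf, inf_sup_right, hb₁, bot_sup_eq, inf_comm (k a) (k x),
      ← inf_sup_left, sup_comm b (k a), hb₂, inf_top_eq]
  have hformula : ∀ m : FrameHom (Set.Ici a × Set.Iic a) K,
      (∀ x : L, m (xMap a x) = k x) →
      ∀ (u : Set.Ici a) (v : Set.Iic a), m (u, v) = (k ↑u ⊓ b) ⊔ k ↑v := by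
    intro m hm u v
    have hka : m (⊥, ⊤) = k a := by
      rw [← hm a]
      congr 1
      refine Prod.ext (Subtype.ext ?_) (Subtype.ext ?_)
      · exact (sup_idem a).symm
      · exact (inf_idem a).symm
    have hmb : m (⊤, ⊥) = b := by
      have e1 : ((⊤ : Set.Ici a), (⊥ : Set.Iic a)) ⊓ ((⊥ : Set.Ici a), (⊤ : Set.Iic a)) = ⊥ := by
        simp only [Prod.ext_iff]
        constructor <;> simp <;> rfl
      have e2 : ((⊤ : Set.Ici a), (⊥ : Set.Iic a)) ⊔ ((⊥ : Set.Ici a), (⊤ : Set.Iic a)) = ⊤ := by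
        simp only [Prod.ext_iff]
        constructor <;> simp <;> rfl
      have hc1 : IsCompl (k a) (m (⊤, ⊥)) := by
        constructor
        · rw [disjoint_iff, ← hka, ← map_inf, inf_comm, e1, map_bot]
        · rw [codisjoint_iff, ← hka, ← map_sup, sup_comm, e2, map_top]
      have hc2 : IsCompl (k a) b := ⟨disjoint_iff.mpr hb₁, codisjoint_iff.mpr hb₂⟩
      exact hc1.right_unique hc2
    have hu : m (u, ⊤) = k ↑u := by
      rw [← hm ↑u]
      congr 1
      refine Prod.ext (Subtype.ext ?_) (Subtype.ext ?_)
      · exact (sup_eq_right.mpr u.2).symm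
      · exact (inf_eq_left.mpr u.2).symm
    have hv : m (⊥, v) = k ↑v := by
      rw [← hm ↑v]
      congr 1
      refine Prod.ext (Subtype.ext ?_) (Subtype.ext ?_)
      · exact (sup_eq_left.mpr v.2).symm
      · exact (inf_eq_right.mpr v.2).symm
    have key : (u, v) = (((u, ⊤) ⊓ ((⊤ : Set.Ici a), (⊥ : Set.Iic a))) ⊔ (⊥, v)) := by
      refine Prod.ext ?_ ?_ <;> simp
    rw [key, map_sup, map_inf, hu, hv, hmb]
  refine ⟨⟨n, hn, ?_⟩, hformula⟩
  intro m hm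
  ext p
  obtain ⟨u, v⟩ := p
  rw [hformula m hm u v]
  rfl
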